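/- Let G_• be a filtered group. Suppose (g_ω)_{ω ∈ {0,1}^k \ {(1,...,1)}} is a configuration in G such that the restriction to every lower face of codimension 1 lies in HK^{k-1}(G_•). Then there exists g ∈ G such that setting g_{(1,...,1)} = g yields an element of HK^k(G_•). -/

import Mathlib

open Subgroup

/-- A filtration on a group `G`: a chain `G = G₀ ⊇ G₁ ⊇ ...` of subgroups with
`[Gᵢ, Gⱼ] ⊆ G_{i+j}` for all `i j`. -/
structure IsGrpFiltration {G : Type*} [Group G] (Gf : ℕ → Subgroup G) : Prop where
  top : Gf 0 = ⊤
  mono : ∀ i, Gf (i + 1) ≤ Gf i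
  comm : ∀ i j, ⁅Gf i, Gf j⁆ ≤ Gf (i + j)

/-- The top vertex `(1,…,1)` of the discrete cube `{0,1}^k`. -/
def topVert (k : ℕ) : Fin k → Bool := fun _ => true

/-- The configuration `[x]_{F_S}`: equal to `x` on the upper face `F_S = {ω : ω ⊇ S}`
and the identity elsewhere. -/
def upperFaceConfig {G : Type*} [Group G] {k : ℕ} (S : Finset (Fin k)) (x : G) :
    (Fin k → Bool) → G :=
  fun ω => if ∀ i ∈ S, ω i = true then x else 1

/-- The Host–Kra cube group `HK^k(G_•)`: the subgroup of `G^{{0,1}^k}` generated by the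
configurations `[x]_{F_S}` with `x ∈ G_{|S|}`. -/
def hostKra {G : Type*} [Group G] (Gf : ℕ → Subgroup G) (k : ℕ) :
    Subgroup ((Fin k → Bool) → G) :=
  Subgroup.closure { c | ∃ (S : Finset (Fin k)) (x : G), x ∈ Gf S.card ∧ c = upperFaceConfig S x }

namespace HKaux

open scoped commutatorElement

variable {G : Type*} [Group G] {k : ℕ}

def supp (ω : Fin k → Bool) : Finset (Fin k) := Finset.univ.filter (fun i => ω i = true)

def wt (ω : Fin k → Bool) : ℕ := (supp ω).card

lemma mem_supp {ω : Fin k → Bool} {i : Fin k} : i ∈ supp ω ↔ ω i = true := by simp [supp]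

lemma ufc_apply (S : Finset (Fin k)) (x : G) (ω : Fin k → Bool) :
    upperFaceConfig S x ω = if S ⊆ supp ω then x else 1 := by
  unfold upperFaceConfig
  congr 1
  simp only [eq_iff_iff]
  constructor
  · intro h i hi; exact mem_supp.2 (h i hi)
  · intro h i hi; exact mem_supp.1 (h hi)

lemma ufc_one (S : Finset (Fin k)) : upperFaceConfig S (1 : G) = 1 := by
  funext ω; simp [ufc_apply]

lemma ufc_mul (S : Finset (Fin k)) (x y : G) :
    upperFaceConfig S x * upperFaceConfig S y = upperFaceConfig S (x * y) := by
  funext ω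
  simp only [Pi.mul_apply, ufc_apply]
  by_cases h : S ⊆ supp ω <;> simp [h]

lemma ufc_inv (S : Finset (Fin k)) (x : G) :
    (upperFaceConfig S x)⁻¹ = upperFaceConfig S x⁻¹ := by
  funext ω
  simp only [Pi.inv_apply, ufc_apply]
  by_cases h : S ⊆ supp ω <;> simp [h]

lemma ufc_swap (S T : Finset (Fin k)) (x y : G) :
    upperFaceConfig S x * upperFaceConfig T y =
      upperFaceConfig T y * upperFaceConfig S x * upperFaceConfig (S ∪ T) ⁅x⁻¹, y⁻¹⁆ := by
  funext ω
  simp only [Pi.mul_apply, ufc_apply, Finset.union_subset_iff]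
  by_cases hA : S ⊆ supp ω <;> by_cases hB : T ⊆ supp ω <;>
    simp [hA, hB, commutatorElement_def] <;> group

noncomputable def enc (S : Finset (Fin k)) : ℕ := (Fintype.equivFin (Finset (Fin k)) S).val

noncomputable def key (S : Finset (Fin k)) : ℕ :=
  S.card * Fintype.card (Finset (Fin k)) + enc S

lemma enc_lt (S : Finset (Fin k)) : enc S < Fintype.card (Finset (Fin k)) :=
  (Fintype.equivFin (Finset (Fin k)) S).isLt

lemma key_mod (S : Finset (Fin k)) : key S % Fintype.card (Finset (Fin k)) = enc S := by
  rw [key, Nat.mul_comm, Nat.mul_add_mod, Nat.mod_eq_of_lt (enc_lt S)]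

lemma key_inj {S T : Finset (Fin k)} (h : key S = key T) : S = T := by
  have h2 : enc S = enc T := by rw [← key_mod S, ← key_mod T, h]
  exact (Fintype.equivFin (Finset (Fin k))).injective (Fin.val_injective h2)

lemma key_lt_of_card_lt {S T : Finset (Fin k)} (h : S.card < T.card) : key S < key T := by
  have h1 : key S < (S.card + 1) * Fintype.card (Finset (Fin k)) := by
    rw [key, Nat.add_mul, Nat.one_mul]
    exact Nat.add_lt_add_left (enc_lt S) _
  exact Nat.lt_of_lt_of_le h1 (Nat.le_trans (Nat.mul_le_mul_right _ h) (Nat.le_add_right _ _))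

lemma card_le_of_key_le {S T : Finset (Fin k)} (h : key S ≤ key T) : S.card ≤ T.card := by
  by_contra hc
  exact absurd (key_lt_of_card_lt (Nat.lt_of_not_le hc)) (Nat.not_lt_of_le h)

lemma key_le_key_union (S T : Finset (Fin k)) : key S ≤ key (S ∪ T) := by
  rcases Nat.lt_or_ge S.card (S ∪ T).card with h | h
  · exact Nat.le_of_lt (key_lt_of_card_lt h)
  · have : S = S ∪ T := Finset.eq_of_subset_of_card_le Finset.subset_union_left h
    rw [← this]

section Lists

variable (Gf : ℕ → Subgroup G)

def listProd (L : List (Finset (Fin k) × G)) : (Fin k → Bool) → G :=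
  (L.map fun p => upperFaceConfig p.1 p.2).prod

lemma listProd_nil : listProd ([] : List (Finset (Fin k) × G)) = 1 := rfl

lemma listProd_cons (p : Finset (Fin k) × G) (L : List (Finset (Fin k) × G)) :
    listProd (p :: L) = upperFaceConfig p.1 p.2 * listProd L := by
  simp [listProd]

def Good (L : List (Finset (Fin k) × G)) : Prop := ∀ p ∈ L, p.2 ∈ Gf p.1.card

def Sorted (L : List (Finset (Fin k) × G)) : Prop :=
  List.Pairwise (fun p q => key p.1 < key q.1) L

noncomputable def cntB (c : ℕ) (L : List (Finset (Fin k) × G)) : ℕ :=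
  (L.filter (fun p => decide (key p.1 < c))).length

lemma cntB_cons (c : ℕ) (p : Finset (Fin k) × G) (L : List (Finset (Fin k) × G)) :
    cntB c (p :: L) = (if key p.1 < c then 1 else 0) + cntB c L := by
  by_cases h : key p.1 < c <;> simp [cntB, List.filter_cons, h, Nat.add_comm]

lemma Gf_anti (hf : IsGrpFiltration Gf) : ∀ {i j : ℕ}, i ≤ j → Gf j ≤ Gf i := by
  intro i j hij
  induction hij with
  | refl => exact le_rfl
  | step h ih => exact le_trans (hf.mono _) ih

lemma listProd_mem (hf : IsGrpFiltration Gf) (L : List (Finset (Fin k) × G)) (hL : Good Gf L) :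
    listProd L ∈ hostKra Gf k := by
  induction L with
  | nil => exact one_mem _
  | cons p L ih =>
      rw [listProd_cons]
      exact mul_mem
        (Subgroup.subset_closure ⟨p.1, p.2, hL p (List.mem_cons_self), rfl⟩)
        (ih fun q hq => hL q (List.mem_cons_of_mem _ hq))

end Lists

section Insertion

variable {Gf : ℕ → Subgroup G}

/-- The collection-process insertion lemma. -/
lemma insertion (hf : IsGrpFiltration Gf) : ∀ (a b : ℕ) (S : Finset (Fin k)) (x : G) (L : List (Finset (Fin k) × G)),
    k + 1 - S.card = a → cntB (key S) L = b →
    Sorted L → Good Gf L → x ∈ Gf S.card →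
    ∃ M, Sorted M ∧ Good Gf M ∧
      listProd M = upperFaceConfig S x * listProd L ∧
      (∀ c ≤ key S, cntB c M ≤ cntB c L) ∧
      (∀ e, (∀ p ∈ L, e ≤ key p.1) → e ≤ key S → ∀ p ∈ M, e ≤ key p.1) := by
  intro a
  induction a using Nat.strong_induction_on with
  | _ a IHa =>
  intro b
  induction b using Nat.strong_induction_on with
  | _ b IHb =>
  intro S x L ha hb hsort hgood hx
  match L with
  | [] =>
      refine ⟨[(S, x)], ?_, ?_, ?_, ?_, ?_⟩
      · exact List.pairwise_singleton _ _
      · intro p hp; rw [List.mem_singleton] at hp; subst hp; exact hx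
      · simp [listProd_cons, listProd_nil]
      · intro c hc
        have : ¬ key S < c := Nat.not_lt_of_le hc
        simp [cntB_cons, this]
      · intro e _ he p hp; rw [List.mem_singleton] at hp; subst hp; exact he
  | (T, y) :: L' =>
      by_cases h1 : key S < key T
      · -- prepend
        refine ⟨(S, x) :: (T, y) :: L', ?_, ?_, rfl, ?_, ?_⟩
        · refine List.Pairwise.cons ?_ hsort
          intro q hq
          rcases List.mem_cons.1 hq with h | h
          · subst h; exact h1
          · exact lt_trans h1 (List.rel_of_pairwise_cons hsort h)
        · intro p hp
          rcases List.mem_cons.1 hp with h | h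
          · subst h; exact hx
          · exact hgood p h
        · intro c hc
          have : ¬ key S < c := Nat.not_lt_of_le hc
          simp [cntB_cons, this]
        · intro e he1 he2 p hp
          rcases List.mem_cons.1 hp with h | h
          · subst h; exact he2
          · exact he1 p h
      · by_cases h2 : S = T
        · -- merge
          subst h2
          refine ⟨(S, x * y) :: L', ?_, ?_, ?_, ?_, ?_⟩
          · refine List.Pairwise.cons ?_ (List.Pairwise.sublist (List.sublist_cons_self _ _) hsort)
            intro q hq; exact List.rel_of_pairwise_cons hsort hq
          · intro p hp
            rcases List.mem_cons.1 hp with h | h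
            · subst h; exact mul_mem hx (hgood (S, y) (List.mem_cons_self))
            · exact hgood p (List.mem_cons_of_mem _ h)
          · rw [listProd_cons, listProd_cons, ← mul_assoc, ufc_mul]
          · intro c _; simp [cntB_cons]
          · intro e he1 _ p hp
            rcases List.mem_cons.1 hp with h | h
            · subst h; exact he1 (S, y) (List.mem_cons_self)
            · exact he1 p (List.mem_cons_of_mem _ h)
        · -- swap with commutator
          have hTS : key T < key S := by
            rcases Nat.lt_trichotomy (key S) (key T) with h | h | h
            · exact absurd h h1
            · exact absurd (key_inj h) h2
            · exact h
          have hy : y ∈ Gf T.card := hgood (T, y) (List.mem_cons_self)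
          have hz : ⁅x⁻¹, y⁻¹⁆ ∈ Gf (S ∪ T).card := by
            have h3 : ⁅x⁻¹, y⁻¹⁆ ∈ Gf (S.card + T.card) :=
              hf.comm S.card T.card (Subgroup.commutator_mem_commutator (inv_mem hx) (inv_mem hy))
            exact Gf_anti Gf hf (Finset.card_union_le S T) h3
          have hsort' : Sorted L' := List.Pairwise.sublist (List.sublist_cons_self _ _) hsort
          have hgood' : Good Gf L' := fun p hp => hgood p (List.mem_cons_of_mem _ hp)
          -- first recursive call : insert (S ∪ T, z) into L'
          have hcntT : cntB (key S) ((T, y) :: L') = 1 + cntB (key S) L' := by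
            simp [cntB_cons, hTS]
          have step1 : ∃ M₁, Sorted M₁ ∧ Good Gf M₁ ∧
              listProd M₁ = upperFaceConfig (S ∪ T) ⁅x⁻¹, y⁻¹⁆ * listProd L' ∧
              (∀ c ≤ key (S ∪ T), cntB c M₁ ≤ cntB c L') ∧
              (∀ e, (∀ p ∈ L', e ≤ key p.1) → e ≤ key (S ∪ T) → ∀ p ∈ M₁, e ≤ key p.1) := by
            rcases Nat.lt_or_ge S.card (S ∪ T).card with hcard | hcard
            · -- card strictly increases : use outer IH
              have hklt : k + 1 - (S ∪ T).card < a := by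
                have h4 : (S ∪ T).card ≤ k := by
                  have := Finset.card_le_univ (S ∪ T)
                  simpa using this
                have h5 : S.card ≤ k := le_trans (Nat.le_of_lt hcard) h4
                omega
              exact IHa _ hklt _ _ _ _ rfl rfl hsort' hgood' hz
            · -- S ∪ T = S : use inner IH
              have hST : S ∪ T = S :=
                (Finset.eq_of_subset_of_card_le Finset.subset_union_left hcard).symm
              have hblt : cntB (key (S ∪ T)) L' < b := by
                rw [hST, ← hb, hcntT]; omega
              have := IHb _ (by rw [← hb, hcntT, hST] at *; omega) (S ∪ T) ⁅x⁻¹, y⁻¹⁆ L' (by rw [hST]; exact ha) rfl hsort' hgood' hz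
              exact this
          obtain ⟨M₁, hM₁s, hM₁g, hM₁p, hM₁c, hM₁l⟩ := step1
          -- second recursive call : insert (S, x) into M₁
          have hb2 : cntB (key S) M₁ < b := by
            have := hM₁c (key S) (key_le_key_union S T)
            rw [← hb, hcntT]; omega
          obtain ⟨M₂, hM₂s, hM₂g, hM₂p, hM₂c, hM₂l⟩ :=
            IHb _ hb2 S x M₁ ha rfl hM₁s hM₁g hx
          refine ⟨(T, y) :: M₂, ?_, ?_, ?_, ?_, ?_⟩
          · refine List.Pairwise.cons ?_ hM₂s
            intro q hq
            have hlb : key T + 1 ≤ key q.1 := by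
              refine hM₂l (key T + 1) ?_ hTS q hq
              intro p hp
              refine hM₁l (key T + 1) ?_ (le_trans hTS (key_le_key_union S T)) p hp
              intro p' hp'
              exact List.rel_of_pairwise_cons hsort hp'
            exact hlb
          · intro p hp
            rcases List.mem_cons.1 hp with h | h
            · subst h; exact hy
            · exact hM₂g p h
          · rw [listProd_cons, hM₂p, hM₁p, listProd_cons]
            rw [← mul_assoc, ← mul_assoc, ← ufc_swap, mul_assoc]
          · intro c hc
            have hc' : c ≤ key (S ∪ T) := le_trans hc (key_le_key_union S T)
            have := hM₂c c hc
            have := hM₁c c hc'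
            rw [cntB_cons, cntB_cons]
            omega
          · intro e he1 he2 p hp
            rcases List.mem_cons.1 hp with h | h
            · subst h; exact he1 (T, y) (List.mem_cons_self)
            · refine hM₂l e ?_ he2 p h
              intro q hq
              refine hM₁l e ?_ (le_trans he2 (key_le_key_union S T)) q hq
              intro q' hq'
              exact he1 q' (List.mem_cons_of_mem _ hq')

end Insertion

section NormalForm

variable {Gf : ℕ → Subgroup G}

lemma listProd_append (A B : List (Finset (Fin k) × G)) :
    listProd (A ++ B) = listProd A * listProd B := by
  simp [listProd]

lemma sortAll (hf : IsGrpFiltration Gf) :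
    ∀ L : List (Finset (Fin k) × G), Good Gf L →
      ∃ M, Sorted M ∧ Good Gf M ∧ listProd M = listProd L := by
  intro L
  induction L with
  | nil =>
      exact fun _ => ⟨[], List.Pairwise.nil, fun p hp => absurd hp (List.not_mem_nil), rfl⟩
  | cons p L ih =>
      intro hg
      obtain ⟨M', hs, hgd, hp⟩ := ih (fun q hq => hg q (List.mem_cons_of_mem _ hq))
      obtain ⟨M, h1, h2, h3, -, -⟩ :=
        insertion hf _ _ p.1 p.2 M' rfl rfl hs hgd (hg p (List.mem_cons_self))
      exact ⟨M, h1, h2, by rw [h3, hp, listProd_cons]⟩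

lemma listProd_reverse_inv (L : List (Finset (Fin k) × G)) :
    listProd (L.reverse.map (fun p => (p.1, p.2⁻¹))) = (listProd L)⁻¹ := by
  induction L with
  | nil => simp [listProd]
  | cons p L ih =>
      rw [List.reverse_cons, List.map_append, listProd_append, ih, listProd_cons]
      simp only [List.map_cons, List.map_nil]
      rw [listProd_cons, listProd_nil, mul_inv_rev, ← ufc_inv, mul_one]

lemma exists_sorted (hf : IsGrpFiltration Gf) {c : (Fin k → Bool) → G} (hc : c ∈ hostKra Gf k) :
    ∃ M, Sorted M ∧ Good Gf M ∧ listProd M = c := by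
  have hlist : ∃ L, Good Gf L ∧ listProd L = c := by
    refine Subgroup.closure_induction ?_ ?_ ?_ ?_ hc
    · rintro x ⟨S, y, hy, rfl⟩
      exact ⟨[(S, y)], fun p hp => by rw [List.mem_singleton] at hp; subst hp; exact hy,
        by rw [listProd_cons, listProd_nil, mul_one]⟩
    · exact ⟨[], fun p hp => absurd hp (List.not_mem_nil), rfl⟩
    · rintro x y - - ⟨L₁, hg₁, rfl⟩ ⟨L₂, hg₂, rfl⟩
      exact ⟨L₁ ++ L₂, fun p hp => by
        rcases List.mem_append.1 hp with h | h
        · exact hg₁ p h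
        · exact hg₂ p h, (listProd_append L₁ L₂)⟩
    · rintro x - ⟨L, hg, rfl⟩
      refine ⟨L.reverse.map (fun p => (p.1, p.2⁻¹)), ?_, listProd_reverse_inv L⟩
      intro p hp
      rw [List.mem_map] at hp
      obtain ⟨q, hq, rfl⟩ := hp
      exact inv_mem (hg q (List.mem_reverse.1 hq))
  obtain ⟨L, hg, rfl⟩ := hlist
  exact sortAll hf L hg

lemma listProd_apply (L : List (Finset (Fin k) × G)) (ω : Fin k → Bool) :
    listProd L ω = (L.map (fun p => if p.1 ⊆ supp ω then p.2 else 1)).prod := by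
  induction L with
  | nil => rfl
  | cons p L ih =>
      rw [listProd_cons, Pi.mul_apply, ih, List.map_cons, List.prod_cons, ufc_apply]

lemma prod_eq_of_unique (l : List (Finset (Fin k) × G)) (f : Finset (Fin k) × G → G)
    (S : Finset (Fin k)) (hpw : l.Pairwise (fun p q => p.1 ≠ q.1))
    (h1 : ∀ p ∈ l, p.1 ≠ S → f p = 1) :
    ∀ p ∈ l, p.1 = S → (l.map f).prod = f p := by
  induction l with
  | nil => intro p hp; exact absurd hp (List.not_mem_nil)
  | cons q l ih =>
      intro p hp hpS
      rcases List.mem_cons.1 hp with h | h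
      · subst h
        rw [List.map_cons, List.prod_cons]
        have : (l.map f).prod = 1 := by
          apply List.prod_eq_one
          intro a ha
          rw [List.mem_map] at ha
          obtain ⟨r, hr, rfl⟩ := ha
          exact h1 r (List.mem_cons_of_mem _ hr)
            (fun hc => (List.rel_of_pairwise_cons hpw hr) (hpS.trans hc.symm))
        rw [this, mul_one]
      · have hq : f q = 1 := h1 q (List.mem_cons_self)
          (fun hc => (List.rel_of_pairwise_cons hpw h) (hc.trans hpS.symm))
        rw [List.map_cons, List.prod_cons, hq, one_mul]
        exact ih (List.Pairwise.sublist (List.sublist_cons_self _ _) hpw)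
          (fun r hr => h1 r (List.mem_cons_of_mem _ hr)) p h hpS

lemma sorted_firsts_ne {M : List (Finset (Fin k) × G)} (hs : Sorted M) :
    M.Pairwise (fun p q => p.1 ≠ q.1) :=
  hs.imp (fun h hc => absurd (congrArg key hc) (Nat.ne_of_lt h))

def vtx (S : Finset (Fin k)) : Fin k → Bool := fun i => decide (i ∈ S)

lemma supp_vtx (S : Finset (Fin k)) : supp (vtx S) = S := by
  ext i; simp [supp, vtx]

lemma vanish {M : List (Finset (Fin k) × G)} (hs : Sorted M) {m : ℕ}
    (hvan : ∀ ω : Fin k → Bool, wt ω < m → listProd M ω = 1) :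
    ∀ p ∈ M, p.1.card < m → p.2 = 1 := by
  have main : ∀ j, ∀ p ∈ M, p.1.card = j → j < m → p.2 = 1 := by
    intro j
    induction j using Nat.strong_induction_on with
    | _ j ih =>
    intro p hp hcard hjm
    have hω : listProd M (vtx p.1) = 1 := by
      apply hvan
      rw [wt, supp_vtx, hcard]; exact hjm
    rw [listProd_apply, supp_vtx] at hω
    have := prod_eq_of_unique M (fun q => if q.1 ⊆ p.1 then q.2 else 1) p.1
      (sorted_firsts_ne hs) ?_ p hp rfl
    · rw [hω] at this
      simpa using this.symm
    · intro q hq hqne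
      by_cases hsub : q.1 ⊆ p.1
      · have hlt : q.1.card < j := by
          rw [← hcard]
          exact Finset.card_lt_card (Finset.ssubset_iff_subset_ne.2 ⟨hsub, hqne⟩)
        simp [hsub, ih _ hlt q hq rfl (lt_trans hlt hjm)]
      · simp [hsub]
  intro p hp hcard
  exact main p.1.card p hp rfl hcard

lemma key_lemma (hf : IsGrpFiltration Gf) {c : (Fin k → Bool) → G} (hc : c ∈ hostKra Gf k)
    {m : ℕ} (hvan : ∀ ω : Fin k → Bool, wt ω < m → c ω = 1) :
    ∀ ω : Fin k → Bool, wt ω = m → c ω ∈ Gf m := by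
  obtain ⟨M, hs, hg, rfl⟩ := exists_sorted hf hc
  intro ω hω
  have hvanM := vanish hs hvan
  rw [listProd_apply]
  by_cases hex : ∃ p ∈ M, p.1 = supp ω
  · obtain ⟨p, hp, hpS⟩ := hex
    have := prod_eq_of_unique M (fun q => if q.1 ⊆ supp ω then q.2 else 1) (supp ω)
      (sorted_firsts_ne hs) ?_ p hp hpS
    · rw [this]
      have : p.1 ⊆ supp ω := hpS.le
      simp only [this, if_true]
      have h2 := hg p hp
      rwa [hpS, ← wt, hω] at h2
    · intro q hq hqne
      by_cases hsub : q.1 ⊆ supp ω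
      · have hlt : q.1.card < m := by
          rw [← hω, wt]
          exact Finset.card_lt_card (Finset.ssubset_iff_subset_ne.2 ⟨hsub, hqne⟩)
        simp [hsub, hvanM q hq hlt]
      · simp [hsub]
  · have : ∀ a ∈ M.map (fun q => if q.1 ⊆ supp ω then q.2 else 1), a = 1 := by
      intro a ha
      rw [List.mem_map] at ha
      obtain ⟨q, hq, rfl⟩ := ha
      by_cases hsub : q.1 ⊆ supp ω
      · have hne : q.1 ≠ supp ω := fun hc' => hex ⟨q, hq, hc'⟩
        have hlt : q.1.card < m := by
          rw [← hω, wt]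
          exact Finset.card_lt_card (Finset.ssubset_iff_subset_ne.2 ⟨hsub, hne⟩)
        simp [hsub, hvanM q hq hlt]
      · simp [hsub]
    rw [List.prod_eq_one this]
    exact one_mem _

end NormalForm

section Main

variable {Gf : ℕ → Subgroup G}

lemma vtx_supp (ω : Fin k → Bool) : vtx (supp ω) = ω := by
  funext i
  simp only [vtx, supp, Finset.mem_filter, Finset.mem_univ, true_and]
  by_cases h : ω i = true
  · simp [h]
  · simp only [Bool.not_eq_true] at h; simp [h]

lemma supp_inj {ω ω' : Fin k → Bool} (h : supp ω = supp ω') : ω = ω' := by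
  rw [← vtx_supp ω, ← vtx_supp ω', h]

end Main

section Main2

variable {Gf : ℕ → Subgroup G} {n : ℕ}

lemma supp_insertNth (i : Fin (n + 1)) (ω : Fin n → Bool) :
    supp (i.insertNth false ω : Fin (n + 1) → Bool) = (supp ω).image i.succAbove := by
  ext l
  rcases eq_or_ne l i with rfl | h
  · simp only [mem_supp, Fin.insertNth_apply_same, Finset.mem_image]
    constructor
    · intro hc; exact absurd hc (by simp)
    · rintro ⟨j, -, hj⟩; exact absurd hj (Fin.succAbove_ne l j)
  · obtain ⟨j, rfl⟩ := Fin.exists_succAbove_eq h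
    simp only [mem_supp, Fin.insertNth_apply_succAbove, Finset.mem_image]
    constructor
    · intro hj; exact ⟨j, hj, rfl⟩
    · rintro ⟨j', hj', hj⟩
      have := Fin.succAbove_right_injective (p := i) hj
      subst this; exact hj'

lemma wt_insertNth (i : Fin (n + 1)) (ω : Fin n → Bool) :
    wt (i.insertNth false ω : Fin (n + 1) → Bool) = wt ω := by
  rw [wt, supp_insertNth, Finset.card_image_of_injective _ Fin.succAbove_right_injective, wt]

lemma insertNth_ne_top (i : Fin (n + 1)) (ω : Fin n → Bool) :
    (i.insertNth false ω : Fin (n + 1) → Bool) ≠ topVert (n + 1) := by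
  intro h
  have := congrFun h i
  rw [Fin.insertNth_apply_same] at this
  simp [topVert] at this

lemma insertNth_removeNth {a : Fin (n + 1) → Bool} {i : Fin (n + 1)} (ha : a i = false) :
    (i.insertNth false (fun j => a (i.succAbove j)) : Fin (n + 1) → Bool) = a := by
  funext l
  rcases eq_or_ne l i with rfl | h
  · rw [Fin.insertNth_apply_same, ha]
  · obtain ⟨j, rfl⟩ := Fin.exists_succAbove_eq h
    rw [Fin.insertNth_apply_succAbove]

lemma wt_le (ω : Fin (n + 1) → Bool) : wt ω ≤ n + 1 := by
  have := Finset.card_le_univ (supp ω)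
  simpa [wt] using this

lemma eq_top_of_wt {ω : Fin (n + 1) → Bool} (h : wt ω = n + 1) : ω = topVert (n + 1) := by
  have hs : supp ω = Finset.univ := Finset.eq_univ_of_card _ (by simpa [wt] using h)
  have := vtx_supp ω
  rw [hs] at this
  rw [← this]
  funext i
  simp [vtx, topVert]

/-- restriction of a generator to a lower face is in the smaller Host-Kra group -/
lemma res_gen (i : Fin (n + 1)) (S : Finset (Fin (n + 1))) (x : G) (hx : x ∈ Gf S.card) :
    (fun ω : Fin n → Bool => upperFaceConfig S x (i.insertNth false ω)) ∈ hostKra Gf n := by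
  by_cases hi : i ∈ S
  · have h1 : (fun ω : Fin n → Bool => upperFaceConfig S x (i.insertNth false ω)) = 1 := by
      funext ω
      unfold upperFaceConfig
      rw [if_neg]
      · rfl
      · intro h
        have := h i hi
        rw [Fin.insertNth_apply_same] at this
        simp at this
    rw [h1]; exact one_mem _
  · set S' := Finset.univ.filter (fun j : Fin n => i.succAbove j ∈ S) with hS'
    have himg : S'.image i.succAbove = S := by
      ext l
      rw [Finset.mem_image]
      constructor
      · rintro ⟨j, hj, rfl⟩
        rw [hS', Finset.mem_filter] at hj
        exact hj.2
      · intro hl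
        obtain ⟨j, rfl⟩ := Fin.exists_succAbove_eq (fun hc : l = i => hi (hc ▸ hl))
        exact ⟨j, by rw [hS', Finset.mem_filter]; exact ⟨Finset.mem_univ _, hl⟩, rfl⟩
    have hcard : S'.card = S.card := by
      rw [← himg, Finset.card_image_of_injective _ Fin.succAbove_right_injective]
    have h2 : (fun ω : Fin n → Bool => upperFaceConfig S x (i.insertNth false ω)) =
        upperFaceConfig S' x := by
      funext ω
      unfold upperFaceConfig
      refine if_congr ?_ rfl rfl
      constructor
      · intro h j hj
        rw [hS', Finset.mem_filter] at hj
        have := h _ hj.2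
        rwa [Fin.insertNth_apply_succAbove] at this
      · intro h l hl
        obtain ⟨j, rfl⟩ := Fin.exists_succAbove_eq (fun hc : l = i => hi (hc ▸ hl))
        rw [Fin.insertNth_apply_succAbove]
        exact h j (by rw [hS', Finset.mem_filter]; exact ⟨Finset.mem_univ _, hl⟩)
    rw [h2]
    exact Subgroup.subset_closure ⟨S', x, by rw [hcard]; exact hx, rfl⟩

lemma descent (hf : IsGrpFiltration Gf) :
    ∀ (t m : ℕ), n + 2 - m ≤ t →
    ∀ (F : Finset (Fin (n + 1) → Bool)) (lam : (Fin (n + 1) → Bool) → G),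
    (∀ i : Fin (n + 1),
      (fun ω : Fin n → Bool => lam (i.insertNth false ω)) ∈ hostKra Gf n) →
    (∀ ω, ω ≠ topVert (n + 1) → wt ω < m → lam ω = 1) →
    (∀ ω, ω ≠ topVert (n + 1) → wt ω = m → ω ∉ F → lam ω = 1) →
    ∃ c ∈ hostKra Gf (n + 1), ∀ ω, ω ≠ topVert (n + 1) → c ω = lam ω := by
  intro t
  induction t with
  | zero =>
      intro m hm F lam _ hvan _
      refine ⟨1, one_mem _, fun ω hω => ?_⟩
      rw [hvan ω hω (by have := wt_le ω; omega)]
      rfl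
  | succ t IHt =>
      intro m hm F
      induction F using Finset.induction_on with
      | empty =>
          intro lam hfaces hvan hF
          refine IHt (m + 1) (by omega) Finset.univ lam hfaces ?_ ?_
          · intro ω hω hwt
            rcases Nat.lt_or_ge (wt ω) m with h | h
            · exact hvan ω hω h
            · exact hF ω hω (by omega) (Finset.notMem_empty ω)
          · intro ω hω hwt hmem
            exact absurd (Finset.mem_univ ω) hmem
      | @insert a F' ha IH_F =>
          intro lam hfaces hvan hF
          by_cases hA : a ≠ topVert (n + 1) ∧ wt a = m
          · obtain ⟨haT, ham⟩ := hA
            -- m ≤ n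
            have hmn : m ≤ n := by
              rcases Nat.lt_or_ge m (n + 1) with h | h
              · omega
              · have h2 := wt_le a
                have h3 : wt a = n + 1 := by omega
                exact absurd (eq_top_of_wt h3) haT
            -- find a coordinate where a is false
            have hi : ∃ i, a i = false := by
              by_contra hc
              push_neg at hc
              apply haT
              funext i
              have := hc i
              simp only [Bool.not_eq_false] at this
              rw [this]; rfl
            obtain ⟨i, hai⟩ := hi
            -- the restriction to face i
            set a' : Fin n → Bool := fun j => a (i.succAbove j) with ha'
            have hins : (i.insertNth false a' : Fin (n + 1) → Bool) = a := insertNth_removeNth hai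
            have hwa' : wt a' = m := by rw [← ham, ← hins, wt_insertNth]
            have hlam_mem : lam a ∈ Gf m := by
              have hkey := key_lemma hf (hfaces i) (m := m) ?_ a' hwa'
              · rwa [hins] at hkey
              · intro ω hω
                exact hvan _ (insertNth_ne_top i ω) (by rwa [wt_insertNth])
            -- the correcting generator
            have hcardsupp : (supp a).card = m := ham
            set c₀ := upperFaceConfig (supp a) (lam a) with hc₀
            have hc₀mem : c₀ ∈ hostKra Gf (n + 1) :=
              Subgroup.subset_closure ⟨supp a, lam a, by rw [hcardsupp]; exact hlam_mem, rfl⟩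
            set lam₂ : (Fin (n + 1) → Bool) → G := fun ω => (c₀ ω)⁻¹ * lam ω with hlam₂
            have hc₀small : ∀ ω : Fin (n + 1) → Bool, wt ω ≤ m → ω ≠ a → c₀ ω = 1 := by
              intro ω hwt hne
              rw [hc₀, ufc_apply, if_neg]
              intro hsub
              have h1 : (supp a).card ≤ (supp ω).card := Finset.card_le_card hsub
              have h2 : supp a = supp ω :=
                Finset.eq_of_subset_of_card_le hsub (by rw [hcardsupp]; exact hwt)
              exact hne (supp_inj h2).symm
            have hfaces₂ : ∀ i' : Fin (n + 1),
                (fun ω : Fin n → Bool => lam₂ (i'.insertNth false ω)) ∈ hostKra Gf n := by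
              intro i'
              have heq : (fun ω : Fin n → Bool => lam₂ (i'.insertNth false ω)) =
                  (fun ω : Fin n → Bool => c₀ (i'.insertNth false ω))⁻¹ *
                  (fun ω : Fin n → Bool => lam (i'.insertNth false ω)) := rfl
              rw [heq]
              exact mul_mem (inv_mem (res_gen i' (supp a) (lam a)
                (by rw [hcardsupp]; exact hlam_mem))) (hfaces i')
            have hvan₂ : ∀ ω, ω ≠ topVert (n + 1) → wt ω < m → lam₂ ω = 1 := by
              intro ω hω hwt
              rw [hlam₂]
              simp only
              rw [hvan ω hω hwt, hc₀small ω (by omega) (fun hc => by rw [hc, ham] at hwt; omega)]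
              simp
            have hF₂ : ∀ ω, ω ≠ topVert (n + 1) → wt ω = m → ω ∉ F' → lam₂ ω = 1 := by
              intro ω hω hwt hmem
              rcases eq_or_ne ω a with rfl | hne
              · rw [hlam₂]
                simp only
                rw [hc₀, ufc_apply]
                simp
              · rw [hlam₂]
                simp only
                rw [hF ω hω hwt (by simp [hne, hmem]),
                  hc₀small ω (by omega) hne]
                simp
            obtain ⟨c₂, hc₂mem, hc₂⟩ := IH_F lam₂ hfaces₂ hvan₂ hF₂
            refine ⟨c₀ * c₂, mul_mem hc₀mem hc₂mem, fun ω hω => ?_⟩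
            rw [Pi.mul_apply, hc₂ ω hω, hlam₂]
            simp
          · -- a is irrelevant: reduce directly to F'
            refine IH_F lam hfaces hvan ?_
            intro ω hω hwt hmem
            have hne : ω ≠ a := by
              rintro rfl
              exact hA ⟨hω, hwt⟩
            exact hF ω hω hwt (by simp [Finset.mem_insert, hne, hmem])

end Main2

end HKaux

/-- (Corner completion in `HK^k(G_•)`.)  If a configuration on
`{0,1}^{n+1} ∖ {(1,…,1)}` restricts to a Host–Kra `n`-cube on every lower codimension-1
face, then its value at the top vertex can be chosen so as to yield an element of
`HK^{n+1}(G_•)`. -/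
theorem hostKra_corner_completion {G : Type*} [Group G] (Gf : ℕ → Subgroup G)
    (hf : IsGrpFiltration Gf) (n : ℕ) (lam : (Fin (n + 1) → Bool) → G)
    (hfaces : ∀ i : Fin (n + 1),
      (fun ω : Fin n → Bool => lam (i.insertNth false ω)) ∈ hostKra Gf n) :
    ∃ g : G, (fun ω => if ω = topVert (n + 1) then g else lam ω) ∈ hostKra Gf (n + 1) := by
  obtain ⟨c, hcmem, hc⟩ := HKaux.descent hf (n + 2) 0 (by omega) Finset.univ lam hfaces
    (fun ω _ h => absurd h (Nat.not_lt_zero _))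
    (fun ω _ _ hmem => absurd (Finset.mem_univ ω) hmem)
  refine ⟨c (topVert (n + 1)), ?_⟩
  have : (fun ω => if ω = topVert (n + 1) then c (topVert (n + 1)) else lam ω) = c := by
    funext ω
    by_cases h : ω = topVert (n + 1)
    · rw [if_pos h, h]
    · rw [if_neg h, hc ω h]
  rw [this]
  exact hcmem
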